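/- The category Pos of partially ordered sets and monotone maps has effective subcongruences: for every subcongruence r0, r1 : R → A in Pos there exist a partial order C and a surjective monotone map c : A → C such that r0, r1 is the subkernel pair of c, i.e., c∘r0 ≤ c∘r1 pointwise, and for all monotone maps v0, v1 : V → A with c∘v0 ≤ c∘v1 pointwise there is a monotone map t : V → R with r0∘t = v0 and r1∘t = v1. -/

import Mathlib

universe u

namespace Paper

/-- The pair `s0, s1` factorizes through the pair of monotone maps `r0, r1`. -/
def FactorsPos {R A S : Type u} [PartialOrder R] [PartialOrder A] [PartialOrder S]
    (r0 r1 : R →o A) (s0 s1 : S →o A) : Prop :=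
  ∃ t : S →o R, r0.comp t = s0 ∧ r1.comp t = s1

/-- `r0, r1` is collectively order-reflecting. -/
def CollOrderReflectingPos {R A : Type u} [PartialOrder R] [PartialOrder A]
    (r0 r1 : R →o A) : Prop :=
  ∀ (X : Type u) [PartialOrder X] (f f' : X →o R),
    r0.comp f ≤ r0.comp f' → r1.comp f ≤ r1.comp f' → f ≤ f'

/-- A subcongruence in `Pos`: an order-reflexive and transitive relation. -/
def IsSubcongruencePos {R A : Type u} [PartialOrder R] [PartialOrder A]
    (r0 r1 : R →o A) : Prop :=
  CollOrderReflectingPos r0 r1 ∧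
  (∀ (S : Type u) [PartialOrder S] (s0 s1 : S →o A), s0 ≤ s1 → FactorsPos r0 r1 s0 s1) ∧
  (∀ (S : Type u) [PartialOrder S] (s s' s'' : S →o A),
    FactorsPos r0 r1 s s' → FactorsPos r0 r1 s' s'' → FactorsPos r0 r1 s s'')

/-- `r0, r1` is the subkernel pair of the monotone map `c : A → C`. -/
def IsSubkernelPairOfPos {R A : Type u} [PartialOrder R] [PartialOrder A]
    (r0 r1 : R →o A) (C : Type u) (instC : PartialOrder C) (c : A → C) : Prop :=
  letI := instC
  Monotone c ∧ (∀ z, c (r0 z) ≤ c (r1 z)) ∧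
    ∀ (V : Type u) [PartialOrder V] (v0 v1 : V →o A),
      (∀ x, c (v0 x) ≤ c (v1 x)) → FactorsPos r0 r1 v0 v1

/-- `Pos` has effective subcongruences: every subcongruence is the
subkernel pair of a surjective monotone map. -/
theorem stmt12 {R A : Type u} [PartialOrder R] [PartialOrder A]
    (r0 r1 : R →o A) (h : IsSubcongruencePos r0 r1) :
    ∃ (C : Type u) (instC : PartialOrder C) (c : A → C),
      Function.Surjective c ∧ IsSubkernelPairOfPos r0 r1 C instC c := by
  obtain ⟨hrefl, horef, htrans⟩ := h
  -- The relation induced by (r0, r1)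
  set E : A → A → Prop := fun a b => ∃ z, r0 z = a ∧ r1 z = b with hEdef
  have hle : ∀ a b : A, a ≤ b → E a b := by
    intro a b hab
    obtain ⟨t, h0, h1⟩ := horef PUnit (OrderHom.const _ a) (OrderHom.const _ b)
      (fun _ => hab)
    exact ⟨t PUnit.unit, DFunLike.congr_fun h0 PUnit.unit, DFunLike.congr_fun h1 PUnit.unit⟩
  have hEr : ∀ a : A, E a a := fun a => hle a a le_rfl
  have hEt : ∀ a b c : A, E a b → E b c → E a c := by
    rintro a b c ⟨z1, hz10, hz11⟩ ⟨z2, hz20, hz21⟩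
    obtain ⟨t, h0, h1⟩ := htrans PUnit (OrderHom.const _ a) (OrderHom.const _ b)
      (OrderHom.const _ c)
      ⟨OrderHom.const _ z1, OrderHom.ext _ _ (funext fun _ => hz10),
        OrderHom.ext _ _ (funext fun _ => hz11)⟩
      ⟨OrderHom.const _ z2, OrderHom.ext _ _ (funext fun _ => hz20),
        OrderHom.ext _ _ (funext fun _ => hz21)⟩
    exact ⟨t PUnit.unit, DFunLike.congr_fun h0 PUnit.unit, DFunLike.congr_fun h1 PUnit.unit⟩
  -- uniqueness / order-reflection at the level of elements
  have hzle : ∀ z z' : R, r0 z ≤ r0 z' → r1 z ≤ r1 z' → z ≤ z' := by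
    intro z z' h0 h1
    exact hrefl PUnit (OrderHom.const _ z) (OrderHom.const _ z')
      (fun _ => h0) (fun _ => h1) PUnit.unit
  -- the quotient
  let s : Setoid A := ⟨fun a b => E a b ∧ E b a,
    fun a => ⟨hEr a, hEr a⟩,
    fun hab => ⟨hab.2, hab.1⟩,
    fun hab hbc => ⟨hEt _ _ _ hab.1 hbc.1, hEt _ _ _ hbc.2 hab.2⟩⟩
  let C := Quotient s
  have hwd : ∀ (a₁ b₁ a₂ b₂ : A), a₁ ≈ a₂ → b₁ ≈ b₂ → E a₁ b₁ = E a₂ b₂ := by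
    intro a₁ b₁ a₂ b₂ ha hb
    exact propext ⟨fun hh => hEt _ _ _ ha.2 (hEt _ _ _ hh hb.1),
      fun hh => hEt _ _ _ ha.1 (hEt _ _ _ hh hb.2)⟩
  let le : C → C → Prop := Quotient.lift₂ E hwd
  let instC : PartialOrder C :=
    { le := le
      lt := fun x y => le x y ∧ ¬ le y x
      lt_iff_le_not_ge := fun _ _ => Iff.rfl
      le_refl := fun x => Quotient.inductionOn x fun a => hEr a
      le_trans := fun x y z => Quotient.inductionOn₃ x y z
        (fun a b c hab hbc => hEt a b c hab hbc)
      le_antisymm := fun x y => Quotient.inductionOn₂ x y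
        (fun a b hab hba => Quotient.sound ⟨hab, hba⟩) }
  refine ⟨C, instC, Quotient.mk s, Quotient.exists_rep, ?_, ?_, ?_⟩
  · intro a b hab
    exact hle a b hab
  · intro z
    exact ⟨z, rfl, rfl⟩
  · intro V _ v0 v1 hv
    have hv' : ∀ x, E (v0 x) (v1 x) := hv
    refine ⟨⟨fun x => (hv' x).choose, ?_⟩, ?_, ?_⟩
    · intro x x' hxx'
      refine hzle _ _ ?_ ?_
      · rw [(hv' x).choose_spec.1, (hv' x').choose_spec.1]
        exact v0.monotone hxx'
      · rw [(hv' x).choose_spec.2, (hv' x').choose_spec.2]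
        exact v1.monotone hxx'
    · exact OrderHom.ext _ _ (funext fun x => (hv' x).choose_spec.1)
    · exact OrderHom.ext _ _ (funext fun x => (hv' x).choose_spec.2)

end Paper
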